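/- Let an implicit scheme be written as u_j^n = u_j^{n+1} + C_{j-1}(u_j^{n+1} - u_{j-1}^{n+1}) on a periodic grid, where C_j ≥ 0 for all j. Then TV(u^{n+1}) ≤ TV(u^n), with no upper bound required on C_j. -/
import Mathlib


/-- Implicit Harten-type lemma on a periodic grid: if the implicit scheme
`u_j^n = u_j^{n+1} + C_{j-1}(u_j^{n+1} - u_{j-1}^{n+1})` holds with `C_j ≥ 0` for all `j`
(no upper bound on `C_j` required), then `TV(u^{n+1}) ≤ TV(u^n)`. -/
theorem harten_implicit_TVD (N : ℕ) [NeZero N] (C : ZMod N → ℝ)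
    (hC : ∀ j, 0 ≤ C j) (u v : ZMod N → ℝ)
    (hscheme : ∀ j : ZMod N, u j = v j + C (j - 1) * (v j - v (j - 1))) :
    ∑ j : ZMod N, |v j - v (j - 1)| ≤ ∑ j : ZMod N, |u j - u (j - 1)| := by
  have key : ∀ j : ZMod N, |v j - v (j-1)| + C (j-1) * |v j - v (j-1)| ≤
      |u j - u (j-1)| + C (j-2) * |v (j-1) - v (j-2)| := by
    intro j
    have h1 := hscheme j
    have h2 := hscheme (j-1)
    have hidx : j - 1 - 1 = j - 2 := by ring
    rw [hidx] at h2
    have e : (1 + C (j-1)) * (v j - v (j-1)) =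
        (u j - u (j-1)) + C (j-2) * (v (j-1) - v (j-2)) := by
      rw [h1, h2]; ring
    have habs : (1 + C (j-1)) * |v j - v (j-1)| ≤
        |u j - u (j-1)| + C (j-2) * |v (j-1) - v (j-2)| := by
      calc (1 + C (j-1)) * |v j - v (j-1)|
          = |1 + C (j-1)| * |v j - v (j-1)| := by
            rw [abs_of_nonneg (show (0:ℝ) ≤ 1 + C (j-1) by linarith [hC (j-1)])]
        _ = |(1 + C (j-1)) * (v j - v (j-1))| := (abs_mul _ _).symm
        _ = |(u j - u (j-1)) + C (j-2) * (v (j-1) - v (j-2))| := by rw [e]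
        _ ≤ |u j - u (j-1)| + |C (j-2) * (v (j-1) - v (j-2))| := abs_add_le _ _
        _ = |u j - u (j-1)| + C (j-2) * |v (j-1) - v (j-2)| := by
            rw [abs_mul, abs_of_nonneg (hC (j-2))]
    linarith
  have hsum := Finset.sum_le_sum (fun j (_ : j ∈ Finset.univ) => key j)
  rw [Finset.sum_add_distrib, Finset.sum_add_distrib] at hsum
  have shift : ∑ j : ZMod N, C (j-1) * |v j - v (j-1)|
      = ∑ j : ZMod N, C (j-2) * |v (j-1) - v (j-2)| := by
    apply Fintype.sum_equiv (Equiv.addRight (1 : ZMod N))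
    intro j
    have e1 : j + 1 - 1 = j := by ring
    have e2 : j + 1 - 2 = j - 1 := by ring
    simp only [Equiv.coe_addRight, e1, e2]
  linarith
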